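/- Let a : [0,1] → ℂ be continuous, let f(θ) = ∑_{k=−r}^{r} f_k e^{ikθ} be a trigonometric polynomial of degree ≤ r, and for each n let G_n = {x_{1,n},…,x_{n,n}} ⊂ [0,1] be a grid such that m(G_n) = max_{1≤i≤n} |x_{i,n} − i/n| → 0 as n → ∞ (an asymptotically uniform family of grids). Then n^{−1/2} ‖S_n^{G_n}(a) ∘ T_n(f) − D_n^{G_n}(a) T_n(f)‖₂ → 0 as n → ∞. -/

import Mathlib

open Matrix

/-- Frobenius norm of a complex square matrix. -/
noncomputable def frob {n : ℕ} (X : Matrix (Fin n) (Fin n) ℂ) : ℝ :=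
  Real.sqrt (∑ i, ∑ j, ‖X i j‖ ^ 2)

/-- Theorem 2.3 (asymptotic form): if `a : [0,1] → ℂ` is continuous, `f` is a trigonometric
polynomial of degree `≤ r`, and the grids `G_n` are asymptotically uniform, i.e.
`m(G_n) = max_i |x_{i,n} − i/n| → 0`, then
`n^{−1/2} ‖S_n^{G_n}(a) ∘ T_n(f) − D_n^{G_n}(a) T_n(f)‖₂ → 0` as `n → ∞`. -/
theorem arrow_shaped_vs_diagonal_sampling_asymptotic
    (r : ℕ) (a : ℝ → ℂ) (ha : ContinuousOn a (Set.Icc 0 1))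
    (fc : ℤ → ℂ) (hfc0 : ∀ k : ℤ, (r : ℤ) < |k| → fc k = 0)
    (x : (n : ℕ) → Fin n → ℝ) (hx : ∀ n i, x n i ∈ Set.Icc (0 : ℝ) 1)
    (hm : Filter.Tendsto (fun n : ℕ => ⨆ i : Fin n, |x n i - (((i : ℕ) : ℝ) + 1) / n|)
      Filter.atTop (nhds 0)) :
    Filter.Tendsto
      (fun n : ℕ =>
        frob ((Matrix.of fun i j : Fin n => a (x n (min i j)) * fc ((i : ℤ) - (j : ℤ))) -
            (Matrix.diagonal fun i : Fin n => a (x n i)) *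
              (Matrix.of fun i j : Fin n => fc ((i : ℤ) - (j : ℤ)))) / Real.sqrt n)
      Filter.atTop (nhds 0) := by
  -- A bound on the Fourier coefficients
  set C : ℝ := ∑ k ∈ Finset.Icc (-(r:ℤ)) (r:ℤ), ‖fc k‖ with hCdef
  have hC0 : 0 ≤ C := Finset.sum_nonneg fun _ _ => norm_nonneg _
  have hfcC : ∀ k : ℤ, ‖fc k‖ ≤ C := by
    intro k
    by_cases hk : k ∈ Finset.Icc (-(r:ℤ)) (r:ℤ)
    · exact Finset.single_le_sum (fun _ _ => norm_nonneg _) hk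
    · have hz : fc k = 0 := by
        apply hfc0
        simp only [Finset.mem_Icc, not_and_or, not_le] at hk
        rw [lt_abs]
        omega
      simp [hz, hC0]
  rw [Metric.tendsto_atTop]
  intro ε hε
  set η : ℝ := ε / (Real.sqrt r * C + 1) with hηdef
  have hden : 0 < Real.sqrt r * C + 1 := by positivity
  have hη : 0 < η := div_pos hε hden
  -- uniform continuity of a on [0,1]
  obtain ⟨δ, hδ, hud⟩ := Metric.uniformContinuousOn_iff.mp
    (isCompact_Icc.uniformContinuousOn_of_continuous ha) η hη
  have hrn : Filter.Tendsto (fun n : ℕ => (r:ℝ)/n) Filter.atTop (nhds 0) :=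
    tendsto_const_div_atTop_nhds_zero_nat (r:ℝ)
  rw [Metric.tendsto_atTop] at hm hrn
  obtain ⟨N1, hN1⟩ := hm (δ/3) (by positivity)
  obtain ⟨N2, hN2⟩ := hrn (δ/3) (by positivity)
  refine ⟨max (max N1 N2) 1, fun n hn => ?_⟩
  have hn1 : 1 ≤ n := le_trans (le_max_right _ _) hn
  have hnN1 : N1 ≤ n := le_trans (le_trans (le_max_left _ _) (le_max_left _ _)) hn
  have hnN2 : N2 ≤ n := le_trans (le_trans (le_max_right _ _) (le_max_left _ _)) hn
  have hnR : (0:ℝ) < n := by exact_mod_cast hn1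
  have hsn : (0:ℝ) < Real.sqrt n := Real.sqrt_pos.mpr hnR
  set B := (Matrix.of fun i j : Fin n => a (x n (min i j)) * fc ((i : ℤ) - (j : ℤ))) -
      (Matrix.diagonal fun i : Fin n => a (x n i)) *
        (Matrix.of fun i j : Fin n => fc ((i : ℤ) - (j : ℤ))) with hB
  -- each grid point is close to uniform
  have hxi : ∀ i : Fin n, |x n i - (((i:ℕ):ℝ) + 1) / n| < δ/3 := by
    intro i
    have h1 : |x n i - (((i:ℕ):ℝ) + 1)/n| ≤ ⨆ i : Fin n, |x n i - (((i:ℕ):ℝ) + 1)/n| :=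
      le_ciSup (f := fun i : Fin n => |x n i - (((i:ℕ):ℝ) + 1)/n|)
        (Set.Finite.bddAbove (Set.finite_range _)) i
    have h2 := hN1 n hnN1
    rw [Real.dist_eq, sub_zero] at h2
    exact h1.trans_lt (lt_of_le_of_lt (le_abs_self _) h2)
  have hrn3 : (r:ℝ)/n < δ/3 := by
    have h2 := hN2 n hnN2
    rw [Real.dist_eq, sub_zero] at h2
    exact lt_of_le_of_lt (le_abs_self _) h2
  -- the matrix entries
  have hD : ∀ i j : Fin n, B i j = (a (x n (min i j)) - a (x n i)) * fc ((i:ℤ) - (j:ℤ)) := by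
    intro i j
    rw [hB]
    simp [Matrix.sub_apply, Matrix.diagonal_mul, sub_mul]
  -- entrywise bound
  have key : ∀ i j : Fin n,
      ‖B i j‖ ^ 2 ≤ if (j:ℕ) < (i:ℕ) ∧ (i:ℕ) - (j:ℕ) ≤ r then (η*C)^2 else 0 := by
    intro i j
    rw [hD]
    rcases le_or_gt i j with hij | hij
    · rw [min_eq_left hij, sub_self, zero_mul, norm_zero]
      have hno : ¬ ((j:ℕ) < (i:ℕ) ∧ (i:ℕ) - (j:ℕ) ≤ r) := by
        have := Fin.le_def.mp hij
        omega
      rw [if_neg hno]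
      norm_num
    · have hji : (j:ℕ) < (i:ℕ) := Fin.lt_def.mp hij
      rw [min_eq_right hij.le]
      by_cases hr : (i:ℕ) - (j:ℕ) ≤ r
      · rw [if_pos ⟨hji, hr⟩]
        -- grid points are close
        have hclose : |x n i - x n j| < δ := by
          have heq : x n i - x n j =
              (x n i - (((i:ℕ):ℝ) + 1)/n) - (x n j - (((j:ℕ):ℝ) + 1)/n)
                + (((i:ℕ):ℝ) - ((j:ℕ):ℝ))/n := by
            field_simp
            ring
          have hnat : (i:ℕ) ≤ (j:ℕ) + r := by omega
          have hreal : ((i:ℕ):ℝ) - ((j:ℕ):ℝ) ≤ (r:ℝ) := by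
            have h' : ((i:ℕ):ℝ) ≤ ((j:ℕ):ℝ) + (r:ℝ) := by exact_mod_cast hnat
            linarith
          have hb : |(((i:ℕ):ℝ) - ((j:ℕ):ℝ))/n| ≤ (r:ℝ)/n := by
            rw [abs_div, abs_of_pos hnR]
            gcongr
            rw [abs_of_nonneg (sub_nonneg.mpr (by exact_mod_cast hji.le))]
            exact hreal
          rw [heq]
          have t1 := abs_add_le ((x n i - (((i:ℕ):ℝ) + 1)/n) - (x n j - (((j:ℕ):ℝ) + 1)/n))
            ((((i:ℕ):ℝ) - ((j:ℕ):ℝ))/n)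
          have t2 := abs_sub (x n i - (((i:ℕ):ℝ) + 1)/n) (x n j - (((j:ℕ):ℝ) + 1)/n)
          linarith [hxi i, hxi j]
        have hdist : ‖a (x n j) - a (x n i)‖ < η := by
          have := hud (x n j) (hx n j) (x n i) (hx n i)
            (by rw [Real.dist_eq, abs_sub_comm]; exact hclose)
          rwa [dist_eq_norm] at this
        calc ‖(a (x n j) - a (x n i)) * fc ((i:ℤ)-(j:ℤ))‖^2
            = (‖a (x n j) - a (x n i)‖ * ‖fc ((i:ℤ)-(j:ℤ))‖)^2 := by rw [norm_mul]
          _ ≤ (η * C)^2 := by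
              apply pow_le_pow_left₀ (by positivity)
              exact mul_le_mul hdist.le (hfcC _) (norm_nonneg _) hη.le
      · have hz : fc ((i:ℤ) - (j:ℤ)) = 0 := by
          apply hfc0
          rw [lt_abs]
          have h1 : ((i : ℤ)) = ((i:ℕ):ℤ) := rfl
          have h2 : ((j : ℤ)) = ((j:ℕ):ℤ) := rfl
          rw [h1, h2]
          omega
        rw [hz, mul_zero, norm_zero, zero_pow (by norm_num : (2:ℕ) ≠ 0)]
        split_ifs <;> positivity
  -- cardinality of nonzero entries per row
  have hcard : ∀ i : Fin n,
      ((Finset.univ : Finset (Fin n)).filter fun j : Fin n => (j:ℕ) < (i:ℕ) ∧ (i:ℕ) - (j:ℕ) ≤ r).card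
        ≤ r := by
    intro i
    have h := Finset.card_le_card_of_injOn
      (s := (Finset.univ : Finset (Fin n)).filter
        fun j : Fin n => (j:ℕ) < (i:ℕ) ∧ (i:ℕ) - (j:ℕ) ≤ r)
      (t := Finset.Icc 1 r)
      (fun j : Fin n => (i:ℕ) - (j:ℕ))
      (fun j hj => by
        simp only [Finset.mem_coe, Finset.coe_filter, Finset.mem_filter, Finset.mem_univ, true_and, Set.mem_setOf_eq] at hj
        simp only [Finset.mem_coe, Finset.coe_Icc, Set.mem_Icc, Finset.mem_Icc]
        omega)
      (fun j1 h1 j2 h2 hEq => by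
        simp only [Finset.coe_filter, Finset.mem_univ, true_and, Set.mem_setOf_eq] at h1 h2
        have hEq' : (i:ℕ) - (j1:ℕ) = (i:ℕ) - (j2:ℕ) := hEq
        exact Fin.ext (by omega))
    simpa [Nat.card_Icc] using h
  -- sum bound
  have hS : (∑ i : Fin n, ∑ j : Fin n, ‖B i j‖^2) ≤ (n:ℝ) * ((r:ℝ) * (η*C)^2) := by
    calc ∑ i : Fin n, ∑ j : Fin n, ‖B i j‖^2
        ≤ ∑ i : Fin n, ∑ j : Fin n,
            (if (j:ℕ) < (i:ℕ) ∧ (i:ℕ) - (j:ℕ) ≤ r then (η*C)^2 else 0) :=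
          Finset.sum_le_sum fun i _ => Finset.sum_le_sum fun j _ => key i j
      _ ≤ ∑ _i : Fin n, (r:ℝ) * (η*C)^2 := by
          apply Finset.sum_le_sum
          intro i _
          rw [← Finset.sum_filter, Finset.sum_const, nsmul_eq_mul]
          exact mul_le_mul_of_nonneg_right (by exact_mod_cast hcard i) (by positivity)
      _ = (n:ℝ) * ((r:ℝ)*(η*C)^2) := by
          rw [Finset.sum_const, Finset.card_univ, Fintype.card_fin, nsmul_eq_mul]
  have hfrob : frob B ≤ Real.sqrt n * (Real.sqrt r * (η*C)) := by
    have h2 : Real.sqrt ((n:ℝ) * ((r:ℝ) * (η*C)^2)) = Real.sqrt n * (Real.sqrt r * (η*C)) := by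
      rw [Real.sqrt_mul (by positivity), Real.sqrt_mul (by positivity),
        Real.sqrt_sq (by positivity)]
    rw [show frob B = Real.sqrt (∑ i, ∑ j, ‖B i j‖^2) from rfl, ← h2]
    exact Real.sqrt_le_sqrt hS
  have hfrob0 : 0 ≤ frob B := Real.sqrt_nonneg _
  rw [Real.dist_eq, sub_zero, abs_of_nonneg (div_nonneg hfrob0 hsn.le)]
  have h3 : frob B / Real.sqrt n ≤ Real.sqrt r * (η*C) := by
    rw [div_le_iff₀ hsn]
    linarith [hfrob]
  refine lt_of_le_of_lt h3 ?_
  have heq : Real.sqrt r * (η*C) = ε * ((Real.sqrt r * C)/(Real.sqrt r * C + 1)) := by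
    rw [hηdef]; ring
  rw [heq]
  calc ε * ((Real.sqrt r * C)/(Real.sqrt r * C + 1)) < ε * 1 := by
        apply mul_lt_mul_of_pos_left _ hε
        rw [div_lt_one hden]
        linarith
    _ = ε := mul_one ε
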